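/- If ξ, ψ are i.i.d. on [0, π/2] with density sin(2θ), then E[cos²(ξ − ψ)] = 1/2 + π²/32. -/

import Mathlib

open MeasureTheory Real Set intervalIntegral
open scoped ENNReal NNReal

lemma integral_density (g : ℝ → ℝ) :
    ∫ x, g x ∂((volume.restrict (Icc 0 (π/2))).withDensity
      (fun θ => ENNReal.ofReal (Real.sin (2*θ)))) = ∫ x in (0:ℝ)..(π/2), Real.sin (2*x) * g x := by
  have hmeas : Measurable fun θ : ℝ => (Real.sin (2*θ)).toNNReal :=
    (Real.measurable_sin.comp (measurable_const_mul 2)).real_toNNReal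
  have h1 : (fun θ : ℝ => ENNReal.ofReal (Real.sin (2*θ)))
      = fun θ => ((Real.sin (2*θ)).toNNReal : ℝ≥0∞) := rfl
  rw [h1, integral_withDensity_eq_integral_smul hmeas]
  rw [intervalIntegral.integral_of_le (by positivity : (0:ℝ) ≤ π/2),
    ← integral_Icc_eq_integral_Ioc]
  refine setIntegral_congr_fun measurableSet_Icc fun x hx => ?_
  have h0 : 0 ≤ Real.sin (2*x) := by
    apply Real.sin_nonneg_of_nonneg_of_le_pi
    · linarith [hx.1]
    · have := hx.2; linarith [this]
  simp [NNReal.smul_def, Real.coe_toNNReal _ h0]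

lemma I_cos : (∫ x in (0:ℝ)..(π/2), Real.sin (2*x) * Real.cos (2*x)) = 0 := by
  rw [intervalIntegral.integral_comp_mul_left (fun y => Real.sin y * Real.cos y) two_ne_zero]
  have h2 : 2*(π/2) = π := by ring
  rw [h2]
  have hd : ∀ y ∈ uIcc (2*(0:ℝ)) π, HasDerivAt (fun y => Real.sin y ^ 2 / 2)
      (Real.sin y * Real.cos y) y := by
    intro y _
    have := ((Real.hasDerivAt_sin y).pow 2).div_const 2
    refine this.congr_deriv ?_
    ring
  rw [intervalIntegral.integral_eq_sub_of_hasDerivAt hd (by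
    apply Continuous.intervalIntegrable; continuity)]
  simp

lemma I_sin : (∫ x in (0:ℝ)..(π/2), Real.sin (2*x) * Real.sin (2*x)) = π/4 := by
  have h : (∫ x in (0:ℝ)..(π/2), Real.sin (2*x) * Real.sin (2*x))
      = ∫ x in (0:ℝ)..(π/2), (fun y => Real.sin y ^ 2) (2*x) := by
    congr 1; ext x; simp [sq]
  rw [h, intervalIntegral.integral_comp_mul_left (fun y => Real.sin y ^ 2) two_ne_zero]
  have h2 : 2*(π/2) = π := by ring
  rw [h2, integral_sin_sq]
  simp [Real.sin_pi]
  ring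

theorem mean_cos_sq_diff
    {Ω : Type*} [MeasurableSpace Ω] (μ : Measure Ω) [IsProbabilityMeasure μ]
    (ξ ψ : Ω → ℝ) (hmξ : Measurable ξ) (hmψ : Measurable ψ)
    (hindep : ProbabilityTheory.IndepFun ξ ψ μ)
    (hξ : μ.map ξ = (volume.restrict (Icc 0 (π/2))).withDensity
      (fun θ => ENNReal.ofReal (Real.sin (2*θ))))
    (hψ : μ.map ψ = (volume.restrict (Icc 0 (π/2))).withDensity
      (fun θ => ENNReal.ofReal (Real.sin (2*θ)))) :
    (∫ ω, Real.cos (ξ ω - ψ ω) ^ 2 ∂μ) = 1/2 + π^2/32 := by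
  have mc : Measurable fun x : ℝ => Real.cos (2*x) :=
    Real.measurable_cos.comp (measurable_const_mul 2)
  have ms : Measurable fun x : ℝ => Real.sin (2*x) :=
    Real.measurable_sin.comp (measurable_const_mul 2)
  -- expectations of single functions
  have exp_eq : ∀ (f : Ω → ℝ), Measurable f →
      μ.map f = (volume.restrict (Icc 0 (π/2))).withDensity
        (fun θ => ENNReal.ofReal (Real.sin (2*θ))) →
      ∀ (g : ℝ → ℝ), Measurable g →
      ∫ ω, g (f ω) ∂μ = ∫ x in (0:ℝ)..(π/2), Real.sin (2*x) * g x := by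
    intro f hmf hf g hg
    rw [← integral_map hmf.aemeasurable hg.aestronglyMeasurable, hf, integral_density]
  have Ecξ : ∫ ω, Real.cos (2 * ξ ω) ∂μ = 0 := by
    rw [exp_eq ξ hmξ hξ _ mc, I_cos]
  have Ecψ : ∫ ω, Real.cos (2 * ψ ω) ∂μ = 0 := by
    rw [exp_eq ψ hmψ hψ _ mc, I_cos]
  have Esξ : ∫ ω, Real.sin (2 * ξ ω) ∂μ = π/4 := by
    rw [exp_eq ξ hmξ hξ _ ms, I_sin]
  have Esψ : ∫ ω, Real.sin (2 * ψ ω) ∂μ = π/4 := by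
    rw [exp_eq ψ hmψ hψ _ ms, I_sin]
  -- integrability
  have ibd : ∀ (f : Ω → ℝ), AEStronglyMeasurable f μ → (∀ ω, |f ω| ≤ 1) →
      Integrable f μ := fun f hm hb =>
    (integrable_const (1:ℝ)).mono' hm (ae_of_all _ fun ω => by simpa using hb ω)
  have icξ : Integrable (fun ω => Real.cos (2 * ξ ω)) μ :=
    ibd _ (mc.comp hmξ).aestronglyMeasurable fun ω => Real.abs_cos_le_one _
  have icψ : Integrable (fun ω => Real.cos (2 * ψ ω)) μ :=
    ibd _ (mc.comp hmψ).aestronglyMeasurable fun ω => Real.abs_cos_le_one _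
  have isξ : Integrable (fun ω => Real.sin (2 * ξ ω)) μ :=
    ibd _ (ms.comp hmξ).aestronglyMeasurable fun ω => Real.abs_sin_le_one _
  have isψ : Integrable (fun ω => Real.sin (2 * ψ ω)) μ :=
    ibd _ (ms.comp hmψ).aestronglyMeasurable fun ω => Real.abs_sin_le_one _
  have icc : Integrable (fun ω => Real.cos (2 * ξ ω) * Real.cos (2 * ψ ω)) μ :=
    ibd _ ((mc.comp hmξ).aestronglyMeasurable.mul (mc.comp hmψ).aestronglyMeasurable)
      fun ω => by
        rw [abs_mul]
        exact mul_le_one₀ (Real.abs_cos_le_one _) (abs_nonneg _) (Real.abs_cos_le_one _)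
  have iss : Integrable (fun ω => Real.sin (2 * ξ ω) * Real.sin (2 * ψ ω)) μ :=
    ibd _ ((ms.comp hmξ).aestronglyMeasurable.mul (ms.comp hmψ).aestronglyMeasurable)
      fun ω => by
        rw [abs_mul]
        exact mul_le_one₀ (Real.abs_sin_le_one _) (abs_nonneg _) (Real.abs_sin_le_one _)
  -- independence of compositions
  have hic : ProbabilityTheory.IndepFun (fun ω => Real.cos (2 * ξ ω))
      (fun ω => Real.cos (2 * ψ ω)) μ := hindep.comp mc mc
  have his : ProbabilityTheory.IndepFun (fun ω => Real.sin (2 * ξ ω))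
      (fun ω => Real.sin (2 * ψ ω)) μ := hindep.comp ms ms
  -- pointwise identity
  have key : ∀ ω, Real.cos (ξ ω - ψ ω) ^ 2 = 1/2
      + (Real.cos (2 * ξ ω) * Real.cos (2 * ψ ω))/2
      + (Real.sin (2 * ξ ω) * Real.sin (2 * ψ ω))/2 := by
    intro ω
    rw [Real.cos_sq, show 2*(ξ ω - ψ ω) = 2 * ξ ω - 2 * ψ ω by ring, Real.cos_sub]
    ring
  simp only [key]
  have iA : Integrable (fun ω => 1/2 + Real.cos (2 * ξ ω) * Real.cos (2 * ψ ω) / 2) μ := by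
    exact (integrable_const _).add (icc.div_const 2)
  have iB : Integrable (fun ω => Real.sin (2 * ξ ω) * Real.sin (2 * ψ ω) / 2) μ :=
    iss.div_const 2
  have iC : Integrable (fun ω => Real.cos (2 * ξ ω) * Real.cos (2 * ψ ω) / 2) μ :=
    icc.div_const 2
  have hC : ∫ a, Real.cos (2 * ξ a) * Real.cos (2 * ψ a) ∂μ
      = (∫ a, Real.cos (2 * ξ a) ∂μ) * ∫ a, Real.cos (2 * ψ a) ∂μ := by
    exact hic.integral_fun_mul_eq_mul_integral icξ.1 icψ.1
  have hS : ∫ a, Real.sin (2 * ξ a) * Real.sin (2 * ψ a) ∂μ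
      = (∫ a, Real.sin (2 * ξ a) ∂μ) * ∫ a, Real.sin (2 * ψ a) ∂μ := by
    exact his.integral_fun_mul_eq_mul_integral isξ.1 isψ.1
  rw [integral_add iA iB, integral_add (integrable_const _) iC,
    MeasureTheory.integral_div, MeasureTheory.integral_div, MeasureTheory.integral_div,
    hC, hS, Ecξ, Ecψ, Esξ, Esψ]
  have h1 : (∫ (_ : Ω), (1:ℝ) ∂μ) = 1 := by simp
  rw [h1]; ring
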